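/- In the factoring PPCSG Γ for composite N: if P and Q are positive integers with P ≤ Q and PQ = N, then the distinguished string w (the concatenation of terminals c_i over all bit positions i where the binary representation of N has a 1) belongs to L(Γ_{s_P}), where s_P is the parameter setting whose group choices encode the binary digits of P. -/

import Mathlib

/-- A general (context-sensitive style) rewriting rule: a left-hand side and a
right-hand side, both strings of symbols. -/
structure GenRule (T N : Type*) where
  lhs : List (Symbol T N)
  rhs : List (Symbol T N)

/-- One rewriting step: some rule of `R` is applied to a contiguous substring. -/
def GStep {T N : Type*} (R : Set (GenRule T N)) (u v : List (Symbol T N)) : Prop :=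
  ∃ r ∈ R, ∃ x y : List (Symbol T N), u = x ++ r.lhs ++ y ∧ v = x ++ r.rhs ++ y

/-- Rewriting: the reflexive-transitive closure of single steps. -/
def GDerives {T N : Type*} (R : Set (GenRule T N)) :
    List (Symbol T N) → List (Symbol T N) → Prop :=
  Relation.ReflTransGen (GStep R)

/-- Nonterminals of the factoring PPCSG. -/
inductive FNT
  | S
  | A (j : ℕ)
  | B (j : ℕ)
  | C (k : ℕ)
  | Z (k : ℕ)

/-- Shorthand for nonterminal symbols (terminals are naturals, `k` coding `c_k`). -/
def nt (x : FNT) : Symbol ℕ FNT := Symbol.nonterminal x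

/-- The rules of the factoring PPCSG `Γ_s`, where `J = ⌈lg √N⌉`, `K = ⌈lg N⌉`
and the parameter setting is given by bits `s : ℕ → Bool` (group
`(A j → A (j-1), A j → B j A (j-1))` takes its second option iff `s j`, and
group `(A 0 → B 0, A 0 → ε)` takes `B 0` iff `s 0`). -/
def factRules (J K : ℕ) (s : ℕ → Bool) : Set (GenRule ℕ FNT) :=
  { r |
    r = ⟨[nt .S], [nt (.A J), nt .S]⟩ ∨
    r = ⟨[nt .S], []⟩ ∨
    r = ⟨[nt (.A 0)], if s 0 then [nt (.B 0)] else []⟩ ∨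
    (∃ j : ℕ, 1 ≤ j ∧ j ≤ J ∧
      r = ⟨[nt (.A j)],
        if s j then [nt (.B j), nt (.A (j - 1))] else [nt (.A (j - 1))]⟩) ∨
    (∃ j : ℕ, 1 ≤ j ∧ j ≤ J ∧
      r = ⟨[nt (.B j)], [nt (.B (j - 1)), nt (.B (j - 1))]⟩) ∨
    r = ⟨[nt (.B 0)], [nt (.C 0)]⟩ ∨
    (∃ k ≤ K, r = ⟨[nt (.C k), nt (.C k)], [nt (.C k), nt (.Z k)]⟩) ∨
    (∃ k ≤ K, r = ⟨[nt (.C k), nt (.Z k)], [nt (.C (k + 1)), nt (.Z k)]⟩) ∨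
    (∃ k ≤ K, r = ⟨[nt (.C (k + 1)), nt (.Z k)], [nt (.C (k + 1))]⟩) ∨
    (∃ k ≤ K, r = ⟨[nt (.C k)], [Symbol.terminal k]⟩) }

/-- The distinguished string for `m`: one terminal `c_i` for each bit position
`i` where the binary representation of `m` has a `1`, in (descending) order. -/
def wStr (m : ℕ) : List ℕ :=
  ((List.range (Nat.size m)).filter fun i => m.testBit i).reverse

/-- The number `P_s` whose binary digits are given by the parameter setting `s`
(bits `0` through `J`). -/
def Ps (J : ℕ) (s : ℕ → Bool) : ℕ :=
  ∑ j ∈ Finset.range (J + 1), if s j then 2 ^ j else 0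


section Aux

variable {T NT : Type*} {R : Set (GenRule T NT)}

lemma GDerives.trans' {u v w : List (Symbol T NT)} (h1 : GDerives R u v)
    (h2 : GDerives R v w) : GDerives R u w := Relation.ReflTransGen.trans h1 h2

lemma gstep_context {u v : List (Symbol T NT)} (x y : List (Symbol T NT))
    (h : GStep R u v) : GStep R (x ++ u ++ y) (x ++ v ++ y) := by
  obtain ⟨r, hr, a, b, rfl, rfl⟩ := h
  exact ⟨r, hr, x ++ a, b ++ y, by simp, by simp⟩

lemma gderives_context {u v : List (Symbol T NT)} (x y : List (Symbol T NT))
    (h : GDerives R u v) : GDerives R (x ++ u ++ y) (x ++ v ++ y) := by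
  induction h with
  | refl => exact Relation.ReflTransGen.refl
  | tail _ hstep ih => exact ih.tail (gstep_context x y hstep)

lemma gderives_append {u₁ u₂ v₁ v₂ : List (Symbol T NT)}
    (h₁ : GDerives R u₁ v₁) (h₂ : GDerives R u₂ v₂) :
    GDerives R (u₁ ++ u₂) (v₁ ++ v₂) := by
  have a := gderives_context [] u₂ h₁
  have b := gderives_context v₁ ([] : List (Symbol T NT)) h₂
  simp only [List.nil_append, List.append_nil] at a b
  exact a.trans' b

lemma gderives_rule (lhs rhs : List (Symbol T NT))
    (hr : (⟨lhs, rhs⟩ : GenRule T NT) ∈ R) : GDerives R lhs rhs :=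
  Relation.ReflTransGen.single ⟨⟨lhs, rhs⟩, hr, [], [], by simp, by simp⟩

end Aux

section Fact

variable (J K : ℕ) (s : ℕ → Bool)

local notation "R" => factRules J K s

lemma fact_S : ∀ q : ℕ, GDerives R [nt .S] (List.replicate q (nt (.A J)))
  | 0 => gderives_rule [nt .S] [] (Or.inr (Or.inl rfl))
  | q + 1 => by
    have h1 : GDerives R [nt .S] [nt (.A J), nt .S] :=
      gderives_rule _ _ (Or.inl rfl)
    have h2 := gderives_context [nt (.A J)] ([] : List (Symbol ℕ FNT)) (fact_S q)
    simp only [List.append_nil] at h2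
    refine h1.trans' ?_
    simpa [List.replicate_succ] using h2

lemma fact_B : ∀ j, j ≤ J → GDerives R [nt (.B j)] (List.replicate (2 ^ j) (nt (.B 0)))
  | 0, _ => by
      have h : GDerives R [nt (.B 0)] [nt (.B 0)] := Relation.ReflTransGen.refl
      simpa [List.replicate] using h
  | j + 1, hj => by
    have h1 : GDerives R [nt (.B (j + 1))] [nt (.B j), nt (.B j)] :=
      gderives_rule _ _ (Or.inr (Or.inr (Or.inr (Or.inr (Or.inl
        ⟨j + 1, Nat.le_add_left 1 j, hj, by simp⟩)))))
    have h2 := gderives_append (fact_B j (Nat.le_of_succ_le hj))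
      (fact_B j (Nat.le_of_succ_le hj))
    refine h1.trans' ?_
    have he : (2 : ℕ) ^ (j + 1) = 2 ^ j + 2 ^ j := by ring
    rw [he, List.replicate_add]
    simpa using h2

lemma fact_A : ∀ j, j ≤ J → GDerives R [nt (.A j)] (List.replicate (Ps j s) (nt (.B 0)))
  | 0, _ => by
    have h1 : GDerives R [nt (.A 0)] (if s 0 then [nt (.B 0)] else []) :=
      gderives_rule _ _ (Or.inr (Or.inr (Or.inl rfl)))
    have hps : Ps 0 s = if s 0 then 1 else 0 := by simp [Ps]
    rw [hps]
    cases hs : s 0 <;> simp [hs] at h1 ⊢ <;> simpa [List.replicate] using h1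
  | j + 1, hj => by
    have h1 : GDerives R [nt (.A (j + 1))]
        (if s (j + 1) then [nt (.B (j + 1)), nt (.A j)] else [nt (.A j)]) :=
      gderives_rule _ _ (Or.inr (Or.inr (Or.inr (Or.inl
        ⟨j + 1, Nat.le_add_left 1 j, hj, by simp⟩))))
    have hps : Ps (j + 1) s = (if s (j + 1) then 2 ^ (j + 1) else 0) + Ps j s := by
      simp [Ps, Finset.sum_range_succ]; ring
    have hA := fact_A j (Nat.le_of_succ_le hj)
    cases hs : s (j + 1) with
    | false =>
      rw [hs] at h1; simp only [Bool.false_eq_true, if_false] at h1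
      rw [hps, hs]; simp only [Bool.false_eq_true, if_false, Nat.zero_add]
      exact h1.trans' hA
    | true =>
      rw [hs] at h1; simp only [if_true] at h1
      rw [hps, hs]; simp only [if_true, List.replicate_add]
      refine h1.trans' ?_
      have := gderives_append (fact_B J K s (j + 1) hj) hA
      simpa using this

lemma fact_merge2 {k : ℕ} (hk : k ≤ K) :
    GDerives R [nt (.C k), nt (.C k)] [nt (.C (k + 1))] := by
  have h1 : GDerives R [nt (.C k), nt (.C k)] [nt (.C k), nt (.Z k)] :=
    gderives_rule _ _ (Or.inr (Or.inr (Or.inr (Or.inr (Or.inr (Or.inr (Or.inl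
      ⟨k, hk, rfl⟩)))))))
  have h2 : GDerives R [nt (.C k), nt (.Z k)] [nt (.C (k + 1)), nt (.Z k)] :=
    gderives_rule _ _ (Or.inr (Or.inr (Or.inr (Or.inr (Or.inr (Or.inr (Or.inr (Or.inl
      ⟨k, hk, rfl⟩))))))))
  have h3 : GDerives R [nt (.C (k + 1)), nt (.Z k)] [nt (.C (k + 1))] :=
    gderives_rule _ _ (Or.inr (Or.inr (Or.inr (Or.inr (Or.inr (Or.inr (Or.inr (Or.inr (Or.inl
      ⟨k, hk, rfl⟩)))))))))
  exact (h1.trans' h2).trans' h3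

lemma fact_mergeAll {k : ℕ} (hk : k ≤ K) :
    ∀ n, GDerives R (List.replicate (2 * n) (nt (.C k)))
      (List.replicate n (nt (.C (k + 1))))
  | 0 => Relation.ReflTransGen.refl
  | n + 1 => by
    have h2 : 2 * (n + 1) = 2 + 2 * n := by ring
    rw [h2, List.replicate_add, List.replicate_succ]
    have := gderives_append (fact_merge2 J K s hk) (fact_mergeAll hk n)
    simpa [List.replicate] using this

lemma size_div2 {m : ℕ} (hm : m ≠ 0) : Nat.size m = Nat.size (m / 2) + 1 := by
  refine le_antisymm ?_ ?_
  · rw [Nat.size_le]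
    have h1 : m / 2 < 2 ^ Nat.size (m / 2) := Nat.lt_size_self _
    have h3 : (1 : ℕ) ≤ 2 ^ Nat.size (m / 2) := Nat.one_le_two_pow
    rw [pow_succ]
    omega
  · rw [Nat.succ_le_iff, Nat.lt_size]
    rcases Nat.eq_zero_or_pos (m / 2) with h | h
    · rw [h, Nat.size_zero, pow_zero]; omega
    · have hlt : Nat.size (m / 2) - 1 < Nat.size (m / 2) := by
        have := Nat.size_pos.mpr h; omega
      have h4 := Nat.lt_size.mp hlt
      have hs : Nat.size (m / 2) = Nat.size (m / 2) - 1 + 1 := by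
        have := Nat.size_pos.mpr h; omega
      rw [hs, pow_succ]
      omega

/-- descending list of `C (k + i)` over set bits of `m`. -/
def cL (k m : ℕ) : List (Symbol ℕ FNT) :=
  (((List.range (Nat.size m)).filter fun i => m.testBit i).reverse).map
    (fun i => nt (.C (k + i)))

lemma cL_rec {m : ℕ} (hm : m ≠ 0) (k : ℕ) :
    cL k m = cL (k + 1) (m / 2) ++ (if m.testBit 0 then [nt (.C k)] else []) := by
  unfold cL
  rw [size_div2 hm, List.range_succ_eq_map, List.filter_cons, List.filter_map]
  have hcomp : ((fun i => m.testBit i) ∘ Nat.succ) = fun i => (m / 2).testBit i := by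
    funext i; simp [Function.comp, Nat.testBit_succ]
  rw [hcomp]
  have hfun : ((fun i => nt (FNT.C (k + i))) ∘ Nat.succ) = fun i => nt (FNT.C (k + 1 + i)) := by
    funext i
    have he : k + Nat.succ i = k + 1 + i := by omega
    simp [Function.comp, he]
  cases hb : m.testBit 0 with
  | false =>
    simp only [hb, Bool.false_eq_true, if_false, List.append_nil]
    rw [← List.map_reverse, List.map_map, hfun, List.map_reverse]
  | true =>
    simp only [hb, if_true, List.reverse_cons]
    rw [List.map_append, ← List.map_reverse, List.map_map, hfun, List.map_reverse]
    simp

lemma fact_carry : ∀ m k, k + Nat.size m ≤ K + 1 →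
    GDerives R (List.replicate m (nt (.C k))) (cL k m) := by
  intro m
  induction m using Nat.strong_induction_on with
  | _ m ih =>
    intro k hk
    rcases Nat.eq_zero_or_pos m with rfl | hm
    · have h : GDerives R [] [] := Relation.ReflTransGen.refl
      simpa [cL] using h
    have hkK : k ≤ K := by
      have : 1 ≤ Nat.size m := Nat.size_pos.mpr hm
      omega
    have hsz : Nat.size m = Nat.size (m / 2) + 1 := size_div2 (by omega)
    have hdecomp : m = 2 * (m / 2) + m % 2 := by omega
    have hstep1 : GDerives R (List.replicate m (nt (.C k)))
        (List.replicate (m / 2) (nt (.C (k + 1))) ++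
          List.replicate (m % 2) (nt (.C k))) := by
      conv_lhs => rw [hdecomp, List.replicate_add]
      exact gderives_append (fact_mergeAll J K s hkK (m / 2)) Relation.ReflTransGen.refl
    have hih : GDerives R (List.replicate (m / 2) (nt (.C (k + 1)))) (cL (k + 1) (m / 2)) :=
      ih (m / 2) (by omega) (k + 1) (by omega)
    have hstep2 := gderives_append hih
      (Relation.ReflTransGen.refl :
        GDerives R (List.replicate (m % 2) (nt (.C k))) (List.replicate (m % 2) (nt (.C k))))
    refine (hstep1.trans' hstep2).trans' ?_
    rw [cL_rec (show m ≠ 0 by omega) k]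
    have hrep : List.replicate (m % 2) (nt (.C k)) =
        (if m.testBit 0 then [nt (.C k)] else []) := by
      rw [Nat.testBit_zero]
      rcases Nat.mod_two_eq_zero_or_one m with h | h <;> simp [h, List.replicate]
    rw [hrep]
    exact Relation.ReflTransGen.refl

lemma fact_terminal : ∀ l : List ℕ, (∀ i ∈ l, i ≤ K) →
    GDerives R (l.map fun i => nt (.C i)) (l.map Symbol.terminal)
  | [], _ => Relation.ReflTransGen.refl
  | i :: l, h => by
    have h1 : GDerives R [nt (.C i)] [Symbol.terminal i] :=
      gderives_rule _ _ (Or.inr (Or.inr (Or.inr (Or.inr (Or.inr (Or.inr (Or.inr (Or.inr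
        (Or.inr ⟨i, h i (by simp), rfl⟩)))))))))
    have := gderives_append h1 (fact_terminal l (fun j hj => h j (by simp [hj])))
    simpa using this

lemma fact_repA (P : ℕ) (h : GDerives R [nt (.A J)] (List.replicate P (nt (.B 0)))) :
    ∀ q : ℕ,
    GDerives R (List.replicate q (nt (.A J))) (List.replicate (q * P) (nt (.B 0)))
  | 0 => by
    have h : GDerives R [] [] := Relation.ReflTransGen.refl
    simpa using h
  | q + 1 => by
    have e : List.replicate (q + 1) (nt (.A J)) =
        [nt (.A J)] ++ List.replicate q (nt (.A J)) := by simp [List.replicate_succ]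
    have e2 : (q + 1) * P = P + q * P := by ring
    rw [e, e2, List.replicate_add]
    exact gderives_append h (fact_repA P h q)

lemma fact_B0C0 : ∀ n : ℕ, GDerives R (List.replicate n (nt (.B 0)))
    (List.replicate n (nt (.C 0)))
  | 0 => Relation.ReflTransGen.refl
  | n + 1 => by
    have h1 : GDerives R [nt (.B 0)] [nt (.C 0)] :=
      gderives_rule _ _ (Or.inr (Or.inr (Or.inr (Or.inr (Or.inr (Or.inl rfl))))))
    have := gderives_append h1 (fact_B0C0 n)
    simpa [List.replicate_succ] using this

end Fact

lemma Ps_testBit (J P : ℕ) : Ps J (fun j => P.testBit j) = P % 2 ^ (J + 1) := by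
  induction J with
  | zero =>
    have h0 : Ps 0 (fun j => P.testBit j) = if P.testBit 0 then 1 else 0 := by simp [Ps]
    rw [h0, Nat.testBit_zero, pow_one]
    rcases Nat.mod_two_eq_zero_or_one P with h | h <;> simp [h]
  | succ J ih =>
    rw [Ps, Finset.sum_range_succ, ← Ps, ih]
    have hmul : (2 : ℕ) ^ (J + 1 + 1) = 2 ^ (J + 1) * 2 := by ring
    rw [hmul, Nat.mod_mul, Nat.testBit_eq_decide_div_mod_eq]
    rcases Nat.mod_two_eq_zero_or_one (P / 2 ^ (J + 1)) with h | h <;> simp [h] <;> ring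

/-- In the factoring PPCSG for `N` (a product of two primes): if `P·Q = N` with
`0 < P ≤ Q`, then the distinguished string `w` belongs to `L(Γ_{s_P})`, where the
parameter setting `s_P` encodes the binary digits of `P`. -/
theorem factoring_ppcsg_completeness (N P Q : ℕ)
    (hN : ∃ p q : ℕ, p.Prime ∧ q.Prime ∧ N = p * q)
    (hP : 0 < P) (hle : P ≤ Q) (hmul : P * Q = N) :
    GDerives (factRules (Nat.clog 2 (Nat.sqrt N)) (Nat.clog 2 N) (fun j => P.testBit j))
      [nt .S] ((wStr N).map Symbol.terminal) := by
  classical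
  set J := Nat.clog 2 (Nat.sqrt N) with hJ
  set K := Nat.clog 2 N with hK
  set s : ℕ → Bool := fun j => P.testBit j with hs
  have hPsqrt : P ≤ Nat.sqrt N := by
    rw [Nat.le_sqrt]
    calc P * P ≤ P * Q := Nat.mul_le_mul_left P hle
    _ = N := hmul
  have hP2 : P < 2 ^ (J + 1) := by
    have h1 : Nat.sqrt N ≤ 2 ^ J := Nat.le_pow_clog (by norm_num) _
    have h3 : (1 : ℕ) ≤ 2 ^ J := Nat.one_le_two_pow
    rw [pow_succ]; omega
  have hPs : Ps J s = P := by
    rw [hs, Ps_testBit, Nat.mod_eq_of_lt hP2]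
  have hNsize : Nat.size N ≤ K + 1 := by
    rw [Nat.size_le]
    have h1 : N ≤ 2 ^ K := Nat.le_pow_clog (by norm_num) _
    have h2 : (1 : ℕ) ≤ 2 ^ K := Nat.one_le_two_pow
    rw [pow_succ]; omega
  have d1 : GDerives (factRules J K s) [nt .S] (List.replicate Q (nt (.A J))) :=
    fact_S J K s Q
  have dA : GDerives (factRules J K s) [nt (.A J)] (List.replicate P (nt (.B 0))) := by
    have := fact_A J K s J le_rfl
    rwa [hPs] at this
  have d2 : GDerives (factRules J K s) (List.replicate Q (nt (.A J)))
      (List.replicate N (nt (.B 0))) := by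
    have := fact_repA J K s P dA Q
    rwa [show Q * P = N by rw [Nat.mul_comm]; exact hmul] at this
  have d3 : GDerives (factRules J K s) (List.replicate N (nt (.B 0)))
      (List.replicate N (nt (.C 0))) := fact_B0C0 J K s N
  have d4 : GDerives (factRules J K s) (List.replicate N (nt (.C 0))) (cL 0 N) :=
    fact_carry J K s N 0 (by omega)
  have hcL : cL 0 N = (wStr N).map fun i => nt (.C i) := by
    simp [cL, wStr]
  have d5 : GDerives (factRules J K s) (cL 0 N) ((wStr N).map Symbol.terminal) := by
    rw [hcL]
    refine fact_terminal J K s (wStr N) ?_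
    intro i hi
    have h1 : i ∈ List.range (Nat.size N) :=
      List.mem_of_mem_filter (List.mem_reverse.mp hi)
    have := List.mem_range.mp h1
    omega
  exact (((d1.trans' d2).trans' d3).trans' d4).trans' d5
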